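/- For even n, the source arc-path on n vertices has directed intersection number exactly n²/2. -/

import Mathlib

/-- `φ` is a directed intersection representation of the digraph with arc relation `A`. -/
def IsDIRep {V : Type*} (A : V → V → Prop) (φ : V → Finset ℕ) : Prop :=
  (∀ v, (φ v).Nonempty) ∧
  ∀ u v, A u v ↔ ((φ u ∩ φ v).Nonempty ∧ (φ u).card < (φ v).card)

/-- The source arc-path on `n` vertices (0-indexed: paper vertex `v_i` is index `i-1`):
arcs `(v_1, v_{2k})` for `1 ≤ k ≤ ⌊n/2⌋` and `(v_k, v_{k+1})` for `1 ≤ k ≤ n-1`. -/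
def SourceArcPath (n : ℕ) : Fin n → Fin n → Prop :=
  fun u v => (u : ℕ) + 1 = (v : ℕ) ∨ ((u : ℕ) = 0 ∧ Odd (v : ℕ))


def sapBase (m j : ℕ) : ℕ := m * (j + 1) + j * (j - 1)

def sapRep (m i : ℕ) : Finset ℕ :=
  if i = 0 then Finset.range m
  else if i % 2 = 1 then insert (i / 2) (Finset.Ico (sapBase m (i / 2)) (sapBase m (i / 2 + 1)))
  else Finset.Ico (sapBase m (i / 2 - 1) + i - 1) (sapBase m (i / 2) + i + 1)

lemma sapBase_succ (m j : ℕ) : sapBase m (j + 1) = sapBase m j + m + 2 * j := by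
  cases j with
  | zero => simp [sapBase]; ring
  | succ k => simp [sapBase]; ring

lemma le_sapBase (m j : ℕ) : m ≤ sapBase m j := by
  have : m * 1 ≤ m * (j + 1) := Nat.mul_le_mul_left m (by omega)
  simp [sapBase]; omega

lemma sapBase_mono (m : ℕ) {j k : ℕ} (h : j ≤ k) : sapBase m j ≤ sapBase m k := by
  induction k with
  | zero => have : j = 0 := by omega
            subst this; omega
  | succ k ih =>
    rcases Nat.lt_or_ge j (k+1) with h' | h'
    · have := ih (by omega); rw [sapBase_succ]; omega
    · have : j = k + 1 := by omega
      subst this; omega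

lemma sapRep_odd (m j : ℕ) :
    sapRep m (2 * j + 1) = insert j (Finset.Ico (sapBase m j) (sapBase m (j + 1))) := by
  have h1 : (2 * j + 1) % 2 = 1 := by omega
  have h2 : (2 * j + 1) / 2 = j := by omega
  simp [sapRep, h1, h2]

lemma sapRep_even (m j : ℕ) :
    sapRep m (2 * j + 2) =
      Finset.Ico (sapBase m j + (2 * j + 1)) (sapBase m (j + 1) + (2 * j + 3)) := by
  have h1 : (2 * j + 2) % 2 = 0 := by omega
  have h2 : (2 * j + 2) / 2 = j + 1 := by omega
  have h3 : (2 * j + 2) ≠ 0 := by omega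
  simp [sapRep, h1, h2, h3]
  congr 1

lemma card_sapRep (m : ℕ) : ∀ i, i < 2 * m → (sapRep m i).card = m + i := by
  intro i hi
  rcases Nat.even_or_odd i with ⟨j, hj⟩ | ⟨j, hj⟩
  · rcases Nat.eq_zero_or_pos j with rfl | hj0
    · simp_all [sapRep]
    · have : i = 2 * (j - 1) + 2 := by omega
      subst this
      rw [sapRep_even, Nat.card_Ico, sapBase_succ]
      omega
  · subst hj
    rw [sapRep_odd, Finset.card_insert_of_notMem, Nat.card_Ico, sapBase_succ]
    · omega
    · intro h
      have := le_sapBase m j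
      simp [Finset.mem_Ico] at h
      omega

lemma sapRep_nonempty (m i : ℕ) (hm : 0 < m) : (sapRep m i).Nonempty := by
  rcases Nat.even_or_odd i with ⟨j, hj⟩ | ⟨j, hj⟩
  · rcases Nat.eq_zero_or_pos j with rfl | hj0
    · have : i = 0 := by omega
      subst this; simp [sapRep]; omega
    · have : i = 2 * (j - 1) + 2 := by omega
      subst this
      rw [sapRep_even]
      refine ⟨sapBase m (j-1) + (2 * (j-1) + 1), ?_⟩
      simp [Finset.mem_Ico, sapBase_succ]
      omega
  · subst hj
    rw [sapRep_odd]
    exact ⟨j, Finset.mem_insert_self _ _⟩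

lemma inter_arc (m u v : ℕ) (hv : v < 2 * m)
    (h : u + 1 = v ∨ (u = 0 ∧ Odd v)) : (sapRep m u ∩ sapRep m v).Nonempty := by
  rcases h with h | ⟨rfl, k, hk⟩
  · -- consecutive
    rcases Nat.even_or_odd u with ⟨j, hj⟩ | ⟨j, hj⟩
    · rcases Nat.eq_zero_or_pos j with rfl | hj0
      · -- u = 0, v = 1
        have hu : u = 0 := by omega
        have hv1 : v = 2 * 0 + 1 := by omega
        subst hu; subst hv1
        refine ⟨0, ?_⟩
        simp [sapRep, sapRep_odd, Finset.mem_inter]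
        omega
      · -- u = 2j'+2, v = 2j'+3
        have hu : u = 2 * (j - 1) + 2 := by omega
        have hv2 : v = 2 * j + 1 := by omega
        subst hv2
        have hj1 : j - 1 + 1 = j := by omega
        rw [hu, sapRep_even, sapRep_odd, hj1]
        refine ⟨sapBase m j, ?_⟩
        have h1 := sapBase_succ m (j - 1)
        rw [hj1] at h1
        have h2 := sapBase_succ m j
        have h3 : 2 * (j-1) + 2 < 2 * m := by omega
        simp [Finset.mem_inter, Finset.mem_Ico, Finset.mem_insert]
        omega
    · -- u = 2j+1, v = 2j+2
      have hv2 : v = 2 * j + 2 := by omega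
      subst hj; subst hv2
      rw [sapRep_odd, sapRep_even]
      refine ⟨sapBase m j + (2 * j + 1), ?_⟩
      have h1 := sapBase_succ m j
      simp [Finset.mem_inter, Finset.mem_Ico, Finset.mem_insert]
      omega
  · -- u = 0, v odd
    have hv2 : v = 2 * k + 1 := by omega
    subst hv2
    refine ⟨k, ?_⟩
    rw [sapRep_odd]
    simp [sapRep, Finset.mem_inter]
    omega

lemma inter_nonarc (m u v : ℕ) (hv : v < 2 * m) (hlt : u < v)
    (h1 : u + 1 ≠ v) (h2 : ¬(u = 0 ∧ Odd v)) : sapRep m u ∩ sapRep m v = ∅ := by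
  rw [Finset.eq_empty_iff_forall_notMem]
  intro x hx
  rw [Finset.mem_inter] at hx
  obtain ⟨hxu, hxv⟩ := hx
  rcases Nat.even_or_odd v with ⟨k, hk⟩ | ⟨k, hk⟩
  · -- v even, so v = 2(k-1)+2 with k ≥ 1
    have hk0 : 0 < k := by omega
    have hk1 : k - 1 + 1 = k := by omega
    rw [show v = 2 * (k - 1) + 2 by omega, sapRep_even, hk1] at hxv
    simp only [Finset.mem_Ico] at hxv
    rcases Nat.even_or_odd u with ⟨j, hj⟩ | ⟨j, hj⟩
    · rcases Nat.eq_zero_or_pos j with rfl | hj0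
      · -- u = 0
        rw [show u = 0 by omega] at hxu
        simp [sapRep] at hxu
        have := le_sapBase m (k - 1)
        omega
      · -- u even ≥ 2, u = 2(j-1)+2
        have hj1 : j - 1 + 1 = j := by omega
        rw [show u = 2 * (j - 1) + 2 by omega, sapRep_even, hj1] at hxu
        simp only [Finset.mem_Ico] at hxu
        have hm1 := sapBase_mono m (show j ≤ k - 1 by omega)
        omega
    · -- u odd = 2j+1
      rw [hj, sapRep_odd] at hxu
      simp only [Finset.mem_insert, Finset.mem_Ico] at hxu
      have hm1 := sapBase_mono m (show j + 1 ≤ k - 1 by omega)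
      have hm2 := le_sapBase m (k - 1)
      omega
  · -- v odd = 2k+1
    have hu0 : u ≠ 0 := fun h => h2 ⟨h, by rw [hk]; exact ⟨k, by omega⟩⟩
    rw [show v = 2 * k + 1 by omega, sapRep_odd] at hxv
    simp only [Finset.mem_insert, Finset.mem_Ico] at hxv
    rcases Nat.even_or_odd u with ⟨j, hj⟩ | ⟨j, hj⟩
    · -- u even ≥ 2, u = 2(j-1)+2
      have hj0 : 0 < j := by omega
      have hj1 : j - 1 + 1 = j := by omega
      rw [show u = 2 * (j - 1) + 2 by omega, sapRep_even, hj1] at hxu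
      simp only [Finset.mem_Ico] at hxu
      have hs := sapBase_succ m j
      have hm1 := sapBase_mono m (show j + 1 ≤ k by omega)
      have hm2 := le_sapBase m (j - 1)
      omega
    · -- u odd = 2j+1
      rw [hj, sapRep_odd] at hxu
      simp only [Finset.mem_insert, Finset.mem_Ico] at hxu
      have hm1 := sapBase_mono m (show j + 1 ≤ k by omega)
      have hm2 := le_sapBase m j
      have hm3 := le_sapBase m k
      omega

lemma sapBase_self (m : ℕ) : sapBase m m = 2 * m ^ 2 := by
  cases m with
  | zero => simp [sapBase]
  | succ k => simp [sapBase]; ring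

lemma sapRep_subset (m i : ℕ) (hi : i < 2 * m) :
    sapRep m i ⊆ Finset.range (sapBase m m) := by
  intro x hx
  rw [Finset.mem_range]
  rcases Nat.even_or_odd i with ⟨j, hj⟩ | ⟨j, hj⟩
  · rcases Nat.eq_zero_or_pos j with rfl | hj0
    · rw [show i = 0 by omega] at hx
      simp [sapRep] at hx
      have := le_sapBase m m
      omega
    · have hj1 : j - 1 + 1 = j := by omega
      rw [show i = 2 * (j - 1) + 2 by omega, sapRep_even, hj1] at hx
      simp only [Finset.mem_Ico] at hx
      have hs := sapBase_succ m j
      have hm1 := sapBase_mono m (show j + 1 ≤ m by omega)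
      omega
  · rw [hj, sapRep_odd] at hx
    simp only [Finset.mem_insert, Finset.mem_Ico] at hx
    have hm1 := sapBase_mono m (show j + 1 ≤ m by omega)
    have hm2 := le_sapBase m m
    omega

lemma exists_block (m : ℕ) :
    ∀ k x, m ≤ x → x < sapBase m k →
      ∃ j, j < k ∧ sapBase m j ≤ x ∧ x < sapBase m (j + 1) := by
  intro k
  induction k with
  | zero =>
    intro x h1 h2
    have : sapBase m 0 = m := by simp [sapBase]
    omega
  | succ k ih =>
    intro x h1 h2
    rcases Nat.lt_or_ge x (sapBase m k) with h | h
    · obtain ⟨j, hj1, hj2, hj3⟩ := ih x h1 h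
      exact ⟨j, by omega, hj2, hj3⟩
    · exact ⟨k, by omega, h, h2⟩

lemma biUnion_sapRep (m n : ℕ) (hn : n = 2 * m) :
    (Finset.univ.biUnion (fun v : Fin n => sapRep m v.val)) = Finset.range (sapBase m m) := by
  apply Finset.Subset.antisymm
  · intro x hx
    simp only [Finset.mem_biUnion] at hx
    obtain ⟨v, -, hxv⟩ := hx
    have := v.isLt
    exact sapRep_subset m v.val (by omega) hxv
  · intro x hx
    rw [Finset.mem_range] at hx
    have hm0 : 0 < m := by
      by_contra h
      have hm : m = 0 := by omega
      rw [hm] at hx; simp [sapBase] at hx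
    rcases Nat.lt_or_ge x m with h | h
    · refine Finset.mem_biUnion.mpr ⟨⟨0, by omega⟩, Finset.mem_univ _, ?_⟩
      simp [sapRep]
      omega
    · obtain ⟨j, hjm, hj1, hj2⟩ := exists_block m m x h hx
      refine Finset.mem_biUnion.mpr ⟨⟨2 * j + 1, by omega⟩, Finset.mem_univ _, ?_⟩
      show x ∈ sapRep m (2 * j + 1)
      rw [sapRep_odd]
      exact Finset.mem_insert_of_mem (Finset.mem_Ico.mpr ⟨hj1, hj2⟩)

lemma isDIRep_sap (m n : ℕ) (hn : n = 2 * m) :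
    IsDIRep (SourceArcPath n) (fun v : Fin n => sapRep m v.val) := by
  constructor
  · intro v
    have := v.isLt
    exact sapRep_nonempty m v.val (by omega)
  · intro u v
    have hu := u.isLt
    have hv := v.isLt
    constructor
    · intro h
      have h' : (u : ℕ) + 1 = (v : ℕ) ∨ ((u : ℕ) = 0 ∧ Odd (v : ℕ)) := h
      refine ⟨inter_arc m u.val v.val (by omega) h', ?_⟩
      have huv : (u : ℕ) < (v : ℕ) := by
        rcases h' with h' | ⟨h0, t, ht⟩ <;> omega
      rw [card_sapRep m u.val (by omega), card_sapRep m v.val (by omega)]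
      omega
    · rintro ⟨hne, hcard⟩
      rw [card_sapRep m u.val (by omega), card_sapRep m v.val (by omega)] at hcard
      by_contra hA
      have hA1 : (u : ℕ) + 1 ≠ (v : ℕ) := fun h => hA (Or.inl h)
      have hA2 : ¬((u : ℕ) = 0 ∧ Odd (v : ℕ)) := fun h => hA (Or.inr h)
      have := inter_nonarc m u.val v.val (by omega) (by omega) hA1 hA2
      rw [this] at hne
      simp at hne

lemma sum_aux' (a : ℕ) : ∀ k, ∑ j ∈ Finset.range k, (a + (2 * j + 1)) = k * a + k ^ 2 := by
  intro k
  induction k with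
  | zero => simp
  | succ k ih =>
    rw [Finset.sum_range_succ, ih]
    ring

lemma lower_bound (m n : ℕ) (hn : n = 2 * m) (φ : Fin n → Finset ℕ)
    (hrep : IsDIRep (SourceArcPath n) φ) :
    2 * m ^ 2 ≤ (Finset.univ.biUnion φ).card := by
  rcases Nat.eq_zero_or_pos m with rfl | hm0
  · simp
  have hn0 : 0 < n := by omega
  set ψ : ℕ → Finset ℕ := fun i => φ ⟨i % n, Nat.mod_lt _ hn0⟩ with hψ
  have key : ∀ j, j + 1 < n → (ψ j).card < (ψ (j + 1)).card := by
    intro j hj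
    have hA : SourceArcPath n ⟨j % n, Nat.mod_lt _ hn0⟩ ⟨(j + 1) % n, Nat.mod_lt _ hn0⟩ := by
      left
      simp [Nat.mod_eq_of_lt (show j < n by omega), Nat.mod_eq_of_lt hj]
    exact ((hrep.2 _ _).mp hA).2
  have hmono : ∀ i d, i + d < n → (ψ i).card + d ≤ (ψ (i + d)).card := by
    intro i d
    induction d with
    | zero => intro _; simp
    | succ d ih =>
      intro h
      have h1 := ih (by omega)
      have h2 := key (i + d) (by omega)
      have he : i + (d + 1) = (i + d) + 1 := by omega
      rw [he]
      omega
  have hdisj : ∀ j k, j < k → 2 * k + 1 < n →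
      Disjoint (ψ (2 * j + 1)) (ψ (2 * k + 1)) := by
    intro j k hjk hk
    have hcard : (ψ (2 * j + 1)).card < (ψ (2 * k + 1)).card := by
      have h := hmono (2 * j + 1) (2 * (k - j)) (by omega)
      have he : 2 * j + 1 + 2 * (k - j) = 2 * k + 1 := by omega
      rw [he] at h
      omega
    have hA : ¬ SourceArcPath n ⟨(2 * j + 1) % n, Nat.mod_lt _ hn0⟩
        ⟨(2 * k + 1) % n, Nat.mod_lt _ hn0⟩ := by
      intro h
      rcases h with h | ⟨h0, ho⟩
      · simp only [Nat.mod_eq_of_lt (show 2 * j + 1 < n by omega),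
          Nat.mod_eq_of_lt (show 2 * k + 1 < n by omega)] at h
        omega
      · simp only [Nat.mod_eq_of_lt (show 2 * j + 1 < n by omega)] at h0
        omega
    rw [Finset.disjoint_iff_inter_eq_empty]
    by_contra hne
    exact hA ((hrep.2 _ _).mpr ⟨Finset.nonempty_iff_ne_empty.mpr hne, hcard⟩)
  have harc : ∀ j, j < m → (ψ 0 ∩ ψ (2 * j + 1)).Nonempty := by
    intro j hj
    have hA : SourceArcPath n ⟨0 % n, Nat.mod_lt _ hn0⟩
        ⟨(2 * j + 1) % n, Nat.mod_lt _ hn0⟩ := by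
      right
      refine ⟨?_, ?_⟩
      · simp [Nat.mod_eq_of_lt hn0]
      · show Odd (((2 * j + 1) % n : ℕ))
        rw [Nat.mod_eq_of_lt (show 2 * j + 1 < n by omega)]
        exact ⟨j, by omega⟩
    exact ((hrep.2 _ _).mp hA).1
  have h0card : m ≤ (ψ 0).card := by
    have hsub : (Finset.range m).biUnion (fun j => ψ 0 ∩ ψ (2 * j + 1)) ⊆ ψ 0 :=
      Finset.biUnion_subset.mpr (fun j _ => Finset.inter_subset_left)
    have hcb : ((Finset.range m).biUnion (fun j => ψ 0 ∩ ψ (2 * j + 1))).card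
        = ∑ j ∈ Finset.range m, (ψ 0 ∩ ψ (2 * j + 1)).card := by
      apply Finset.card_biUnion
      intro a ha b hb hab
      rw [Finset.coe_range, Set.mem_Iio] at ha hb
      rcases Nat.lt_or_ge a b with h | h
      · exact (hdisj a b h (by omega)).mono Finset.inter_subset_right Finset.inter_subset_right
      · exact ((hdisj b a (by omega) (by omega)).mono
          Finset.inter_subset_right Finset.inter_subset_right).symm
    calc m = ∑ _j ∈ Finset.range m, 1 := by simp
      _ ≤ ∑ j ∈ Finset.range m, (ψ 0 ∩ ψ (2 * j + 1)).card :=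
          Finset.sum_le_sum (fun j hj =>
            (harc j (Finset.mem_range.mp hj)).card_pos)
      _ = _ := hcb.symm
      _ ≤ (ψ 0).card := Finset.card_le_card hsub
  have hcb2 : ((Finset.range m).biUnion (fun j => ψ (2 * j + 1))).card
      = ∑ j ∈ Finset.range m, (ψ (2 * j + 1)).card := by
    apply Finset.card_biUnion
    intro a ha b hb hab
    rw [Finset.coe_range, Set.mem_Iio] at ha hb
    rcases Nat.lt_or_ge a b with h | h
    · exact hdisj a b h (by omega)
    · exact (hdisj b a (by omega) (by omega)).symm
  have hsum : ∑ j ∈ Finset.range m, (ψ (2 * j + 1)).card ≤ (Finset.univ.biUnion φ).card := by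
    rw [← hcb2]
    apply Finset.card_le_card
    apply Finset.biUnion_subset.mpr
    intro j hj
    exact Finset.subset_biUnion_of_mem φ (Finset.mem_univ _)
  have hterm : ∀ j ∈ Finset.range m, m + (2 * j + 1) ≤ (ψ (2 * j + 1)).card := by
    intro j hj
    rw [Finset.mem_range] at hj
    have h := hmono 0 (2 * j + 1) (by omega)
    simp only [Nat.zero_add] at h
    omega
  calc 2 * m ^ 2 = ∑ j ∈ Finset.range m, (m + (2 * j + 1)) := by
        rw [sum_aux']; ring
    _ ≤ ∑ j ∈ Finset.range m, (ψ (2 * j + 1)).card := Finset.sum_le_sum hterm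
    _ ≤ _ := hsum


/-- For even `n`, the source arc-path on `n` vertices has `DIN = n²/2`. -/
theorem stmt_7 (n : ℕ) (hn : Even n) :
    IsLeast {k : ℕ | ∃ φ : Fin n → Finset ℕ, IsDIRep (SourceArcPath n) φ ∧
        (Finset.univ.biUnion φ).card = k}
      (n ^ 2 / 2) := by
  obtain ⟨m, hm⟩ := hn
  have hn2 : n = 2 * m := by omega
  have hpow : n ^ 2 / 2 = 2 * m ^ 2 := by
    have : n ^ 2 = 2 * (2 * m ^ 2) := by rw [hn2]; ring
    omega
  constructor
  · refine ⟨fun v => sapRep m v.val, isDIRep_sap m n hn2, ?_⟩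
    rw [biUnion_sapRep m n hn2, Finset.card_range, sapBase_self, hpow]
  · rintro k ⟨φ, hrep, hcard⟩
    rw [hpow, ← hcard]
    exact lower_bound m n hn2 φ hrep
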